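/- Let λ > 0 and a ∈ ℝ^q with λ ≥ ‖a‖₁ = Σ_{i=1}^q |a_i|. Then the zero vector is the unique minimizer of the function b ↦ λ‖b‖_∞ + (1/2)‖b − a‖₂² on ℝ^q, where ‖b‖_∞ = max_{1≤i≤q} |b_i| and ‖·‖₂ is the Euclidean norm. -/
import Mathlib


/-- if `λ ≥ ‖a‖₁`, then `0` is the unique minimizer of
`b ↦ λ‖b‖_∞ + (1/2)‖b − a‖₂²` on `ℝ^q`. -/
theorem stmt_11 (q : ℕ) [NeZero q] (l : ℝ) (hl : 0 < l) (a : Fin q → ℝ)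
    (hla : ∑ i, |a i| ≤ l)
    (f : (Fin q → ℝ) → ℝ)
    (hf : ∀ b, f b = l * (Finset.univ.sup' Finset.univ_nonempty fun i => |b i|)
      + (1 / 2) * ∑ i, (b i - a i) ^ 2) :
    (∀ b, f 0 ≤ f b) ∧ (∀ b, (∀ c, f b ≤ f c) → b = 0) := by
  have key : ∀ b : Fin q → ℝ, f 0 + (1/2) * ∑ i, (b i)^2 ≤ f b := by
    intro b
    rw [hf, hf]
    set M := Finset.univ.sup' Finset.univ_nonempty fun i => |b i| with hM
    have hle : ∀ i, |b i| ≤ M := fun i => Finset.le_sup' (fun j => |b j|) (Finset.mem_univ i)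
    have hM0 : 0 ≤ M :=
      le_trans (abs_nonneg _) (hle (Classical.arbitrary (Fin q)))
    have h1 : ∑ i, b i * a i ≤ l * M := by
      calc ∑ i, b i * a i ≤ ∑ i, |b i * a i| :=
            Finset.sum_le_sum fun i _ => le_abs_self _
        _ ≤ ∑ i, M * |a i| := Finset.sum_le_sum fun i _ => by
            rw [abs_mul]; exact mul_le_mul_of_nonneg_right (hle i) (abs_nonneg _)
        _ = M * ∑ i, |a i| := by rw [Finset.mul_sum]
        _ ≤ M * l := mul_le_mul_of_nonneg_left hla hM0
        _ = l * M := mul_comm _ _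
    have expand : ∑ i, (b i - a i)^2
        = (∑ i, (b i)^2) - 2 * (∑ i, b i * a i) + ∑ i, (a i)^2 := by
      rw [Finset.mul_sum, ← Finset.sum_sub_distrib, ← Finset.sum_add_distrib]
      exact Finset.sum_congr rfl fun i _ => by ring
    have hsup0 : (Finset.univ.sup' Finset.univ_nonempty
        fun i => |(0 : Fin q → ℝ) i|) = 0 := by
      simp
    rw [hsup0]
    simp only [Pi.zero_apply, zero_sub, neg_sq]
    rw [expand]
    linarith
  have hsq : ∀ b : Fin q → ℝ, 0 ≤ ∑ i, (b i)^2 :=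
    fun b => Finset.sum_nonneg fun i _ => sq_nonneg _
  constructor
  · intro b; linarith [key b, hsq b]
  · intro b hb
    have h1 := key b
    have h2 := hb 0
    have h3 : ∑ i, (b i)^2 = 0 := le_antisymm (by linarith) (hsq b)
    funext i
    have := (Finset.sum_eq_zero_iff_of_nonneg
      (fun i _ => sq_nonneg (b i))).mp h3 i (Finset.mem_univ i)
    have : b i = 0 := by nlinarith [this]
    simpa using this
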